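/- Let Ω be a q-closed sesquilinear form on D ⊆ H with respect to ‖·‖_Ω, let E = D[‖·‖_Ω] with conjugate dual E^×, and for a bounded form Υ on H let X_Υ : E → E^× be the bounded operator with ⟨X_Υ ξ, η⟩ = (Ω+Υ)(ξ,η). Then Υ ∈ P₀(Ω) if and only if X_Υ is a bijection of E onto E^×, if and only if X_Υ is invertible with bounded inverse. -/

import Mathlib

noncomputable section

open Filter Topology Function
open scoped InnerProductSpace

namespace Paper

variable {V : Type} [AddCommGroup V] [Module ℂ V]

/-- `n` is a norm on the complex vector space `V`. -/
def IsNormFn (n : V → ℝ) : Prop :=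
  (∀ x : V, n x = 0 ↔ x = 0) ∧
    (∀ (c : ℂ) (x : V), n (c • x) = ‖c‖ * n x) ∧
      ∀ x y : V, n (x + y) ≤ n x + n y

/-- `ξ` is a Cauchy sequence with respect to the norm `n`. -/
def IsCauchyWrt (n : V → ℝ) (ξ : ℕ → V) : Prop :=
  ∀ ε : ℝ, 0 < ε → ∃ N : ℕ, ∀ p q : ℕ, N ≤ p → N ≤ q → n (ξ p - ξ q) < ε

/-- `ξ` tends to `x` with respect to the norm `n`. -/
def TendstoWrt (n : V → ℝ) (ξ : ℕ → V) (x : V) : Prop :=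
  Tendsto (fun k => n (ξ k - x)) atTop (𝓝 0)

/-- `V` is complete with respect to the norm `n`. -/
def CompleteWrt (n : V → ℝ) : Prop :=
  ∀ ξ : ℕ → V, IsCauchyWrt n ξ → ∃ x : V, TendstoWrt n ξ x

/-- The two norms `n₁` and `n₂` are equivalent. -/
def EquivNorms (n₁ n₂ : V → ℝ) : Prop :=
  ∃ c₁ : ℝ, 0 < c₁ ∧ ∃ c₂ : ℝ, 0 < c₂ ∧ ∀ x : V, n₁ x ≤ c₁ * n₂ x ∧ n₂ x ≤ c₂ * n₁ x

/-- `Ω` is a sesquilinear form: linear in the first entry, conjugate-linear in the second. -/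
def IsSesq (Ω : V → V → ℂ) : Prop :=
  (∀ η : V, IsLinearMap ℂ fun ξ => Ω ξ η) ∧
    ∀ ξ : V, IsLinearMap ℂ fun η => (starRingEnd ℂ) (Ω ξ η)

/-- `T` is a positive form: `T(ξ,ξ) ≥ 0` for every `ξ`. -/
def IsPositiveForm (T : V → V → ℂ) : Prop :=
  ∀ x : V, (T x x).im = 0 ∧ 0 ≤ (T x x).re

/-- The norm `n` is compatible with the positive sesquilinear form `T`. -/
def CompatibleWithForm (T : V → V → ℂ) (n : V → ℝ) : Prop :=
  (∃ α : ℝ, 0 < α ∧ ∀ ξ : V, (T ξ ξ).re ≤ α * n ξ ^ 2) ∧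
    ∀ ξ : ℕ → V, Tendsto (fun k => (T (ξ k) (ξ k)).re) atTop (𝓝 0) →
      IsCauchyWrt n ξ → Tendsto (fun k => n (ξ k)) atTop (𝓝 0)

/-- A realization of `(V, n)` as a dense subspace of a reflexive Banach space `E`. -/
structure BanachModel (V : Type) [AddCommGroup V] [Module ℂ V] (n : V → ℝ) : Type 1 where
  E : Type
  [instGroup : NormedAddCommGroup E]
  [instSpace : NormedSpace ℂ E]
  [instComplete : CompleteSpace E]
  j : V →ₗ[ℂ] E
  isometry : ∀ x : V, ‖j x‖ = n x
  dense : DenseRange j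
  reflexive : Surjective (NormedSpace.inclusionInDoubleDual ℂ E)

/-- `V` endowed with the norm `n` is a reflexive Banach space. -/
def IsReflexiveBanachWrt (n : V → ℝ) : Prop :=
  ∃ M : BanachModel V n, Surjective M.j

/-- The completion of `V` with respect to the norm `n` is a reflexive Banach space. -/
def CompletionIsReflexiveBanach (n : V → ℝ) : Prop :=
  Nonempty (BanachModel V n)

variable {H : Type} [NormedAddCommGroup H] [InnerProductSpace ℂ H]

/-- The embedding of `D[n]` into `H` is continuous. -/
def EmbedsContinuously (D : Submodule ℂ H) (n : D → ℝ) : Prop :=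
  ∃ α : ℝ, 0 < α ∧ ∀ ξ : D, ‖(ξ : H)‖ ≤ α * n ξ

/-- The norm `n` on `D` is compatible with the inner product of `H`. -/
def CompatibleWithInner (D : Submodule ℂ H) (n : D → ℝ) : Prop :=
  EmbedsContinuously D n ∧
    ∀ ξ : ℕ → D, Tendsto (fun k => ‖(ξ k : H)‖) atTop (𝓝 0) →
      IsCauchyWrt n ξ → Tendsto (fun k => n (ξ k)) atTop (𝓝 0)

/-- The form `Ω` is bounded on `D[n]`. -/
def BoundedOn (D : Submodule ℂ H) (Ω : D → D → ℂ) (n : D → ℝ) : Prop :=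
  ∃ β : ℝ, 0 < β ∧ ∀ ξ η : D, ‖Ω ξ η‖ ≤ β * n ξ * n η

/-- `Ω` is q-closed with respect to the norm `n` (Definition 5.2 of Di Bella–Trapani). -/
def IsQClosed (D : Submodule ℂ H) (Ω : D → D → ℂ) (n : D → ℝ) : Prop :=
  IsNormFn n ∧ CompatibleWithInner D n ∧ IsReflexiveBanachWrt n ∧ BoundedOn D Ω n

/-- `Ω` is q-closable with respect to the norm `n`. -/
def IsQClosable (D : Submodule ℂ H) (Ω : D → D → ℂ) (n : D → ℝ) : Prop :=
  IsNormFn n ∧ CompatibleWithInner D n ∧ CompletionIsReflexiveBanach n ∧ BoundedOn D Ω n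

/-- `Λ` is a bounded conjugate-linear functional on `D[n]`,
i.e. an element of the conjugate dual of `D[n]`. -/
def MemConjDual (D : Submodule ℂ H) (n : D → ℝ) (Λ : D → ℂ) : Prop :=
  (∀ x y : D, Λ (x + y) = Λ x + Λ y) ∧
    (∀ (c : ℂ) (x : D), Λ (c • x) = (starRingEnd ℂ) c * Λ x) ∧
      ∃ C : ℝ, ∀ x : D, ‖Λ x‖ ≤ C * n x

/-- `Υ` is a bounded sesquilinear form on `H`. -/
def IsBoundedForm (Υ : H → H → ℂ) : Prop :=
  IsSesq Υ ∧ ∃ C : ℝ, ∀ x y : H, ‖Υ x y‖ ≤ C * ‖x‖ * ‖y‖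

/-- `Υ ∈ P₀(Ω)`: `N(Ω+Υ) = {0}` and every element of the conjugate dual of `D[n]`
is represented by `Ω+Υ`. -/
def InP0 (D : Submodule ℂ H) (Ω : D → D → ℂ) (n : D → ℝ) (Υ : H → H → ℂ) : Prop :=
  (∀ ξ : D, (∀ η : D, Ω ξ η + Υ ↑ξ ↑η = 0) → ξ = 0) ∧
    ∀ Λ : D → ℂ, MemConjDual D n Λ → ∃ ξ : D, ∀ η : D, Λ η = Ω ξ η + Υ ↑ξ ↑η

/-- `Ω` is solvable with respect to the norm `n`. -/
def IsSolvable (D : Submodule ℂ H) (Ω : D → D → ℂ) (n : D → ℝ) : Prop :=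
  IsQClosed D Ω n ∧ ∃ Υ : H → H → ℂ, IsBoundedForm Υ ∧ InP0 D Ω n Υ

/-- The numerical range of a form on `D`. -/
def NumRangeForm (D : Submodule ℂ H) (Ω : D → D → ℂ) : Set ℂ :=
  {z : ℂ | ∃ ξ : D, ‖(ξ : H)‖ = 1 ∧ z = Ω ξ ξ}

/-- The numerical range of a form on `H`. -/
def NumRangeFormH (Υ : H → H → ℂ) : Set ℂ :=
  {z : ℂ | ∃ x : H, ‖x‖ = 1 ∧ z = Υ x x}

/-- `sup { |Θ(ξ,η)| : ‖η‖_Ω = 1 }`. -/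
def FormSup (D : Submodule ℂ H) (Θ : D → D → ℂ) (n : D → ℝ) (ξ : D) : ℝ :=
  sSup {r : ℝ | ∃ η : D, n η = 1 ∧ r = ‖Θ ξ η‖}

end Paper

namespace Paper

private lemma norm_nonneg_of_isNormFn {V : Type} [AddCommGroup V] [Module ℂ V]
    {n : V → ℝ} (h : IsNormFn n) (x : V) : 0 ≤ n x := by
  obtain ⟨h0, hs, ha⟩ := h
  have h1 : n ((-1 : ℂ) • x) = n x := by
    rw [hs]; simp
  have h2 : n (x + (-1 : ℂ) • x) = 0 := by
    have : x + (-1 : ℂ) • x = 0 := by simp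
    rw [this, (h0 0).2 rfl]
  have h3 := ha x ((-1 : ℂ) • x)
  rw [h1, h2] at h3
  linarith

set_option maxHeartbeats 2000000 in
private lemma key_estimate {H : Type} [NormedAddCommGroup H] [InnerProductSpace ℂ H]
    (D : Submodule ℂ H)
    (Ω : ↥D → ↥D → ℂ) (hsesq : IsSesq Ω) (n : ↥D → ℝ) (hq : IsQClosed D Ω n)
    (Υ : H → H → ℂ) (hΥ : IsBoundedForm Υ)
    (hinj : Function.Injective (fun ξ : ↥D => (fun η : ↥D => Ω ξ η + Υ ↑ξ ↑η)))
    (hsurj : ∀ Λ : ↥D → ℂ, MemConjDual D n Λ →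
          ∃ ξ : ↥D, (fun η : ↥D => Ω ξ η + Υ ↑ξ ↑η) = Λ) :
    ∃ c : ℝ, 0 < c ∧ ∀ ξ : ↥D,
      c * n ξ ≤ FormSup D (fun a b => Ω a b + Υ ↑a ↑b) n ξ := by
  classical
  obtain ⟨hnorm, hcompat, hrefl, hbddΩ⟩ := hq
  obtain ⟨⟨α, hα, hαle⟩, -⟩ := hcompat
  obtain ⟨β, hβ, hβle⟩ := hbddΩ
  obtain ⟨⟨hΥ1, hΥ2⟩, C, hC⟩ := hΥ
  have hn0 := hnorm.1
  have hnsmul := hnorm.2.1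
  have hn_nonneg : ∀ x : ↥D, 0 ≤ n x := norm_nonneg_of_isNormFn hnorm
  set Θ : ↥D → ↥D → ℂ := fun a b => Ω a b + Υ ↑a ↑b with hΘdef
  set K : ℝ := β + α * α * max C 0 with hKdef
  have hK : 0 < K := by
    have : 0 ≤ max C 0 := le_max_right _ _
    nlinarith
  have hΘb : ∀ ξ η : ↥D, ‖Θ ξ η‖ ≤ K * n ξ * n η := by
    intro ξ η
    have h1 : ‖Θ ξ η‖ ≤ ‖Ω ξ η‖ + ‖Υ ↑ξ ↑η‖ := norm_add_le _ _
    have h2 := hβle ξ η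
    have h3 := hC (↑ξ : H) (↑η : H)
    have h4 := hαle ξ
    have h5 := hαle η
    have hx : (0:ℝ) ≤ ‖(↑ξ : H)‖ := norm_nonneg _
    have hy : (0:ℝ) ≤ ‖(↑η : H)‖ := norm_nonneg _
    have hxy : (0:ℝ) ≤ ‖(↑ξ : H)‖ * ‖(↑η : H)‖ := mul_nonneg hx hy
    have hm : (0:ℝ) ≤ max C 0 := le_max_right _ _
    have h6 : ‖Υ (↑ξ : H) ↑η‖ ≤ max C 0 * (‖(↑ξ : H)‖ * ‖(↑η : H)‖) := by
      calc ‖Υ (↑ξ : H) ↑η‖ ≤ C * ‖(↑ξ : H)‖ * ‖(↑η : H)‖ := h3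
      _ = C * (‖(↑ξ : H)‖ * ‖(↑η : H)‖) := by ring
      _ ≤ max C 0 * (‖(↑ξ : H)‖ * ‖(↑η : H)‖) :=
          mul_le_mul_of_nonneg_right (le_max_left _ _) hxy
    have hnn1 := hn_nonneg ξ
    have hnn2 := hn_nonneg η
    have hinner : ‖(↑ξ : H)‖ * ‖(↑η : H)‖ ≤ (α * n ξ) * (α * n η) :=
      mul_le_mul h4 h5 hy (by positivity)
    have h7 : max C 0 * (‖(↑ξ : H)‖ * ‖(↑η : H)‖) ≤ max C 0 * ((α * n ξ) * (α * n η)) :=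
      mul_le_mul_of_nonneg_left hinner hm
    have h8 : max C 0 * ((α * n ξ) * (α * n η)) = α * α * max C 0 * (n ξ * n η) := by
      ring
    have h9 : K * n ξ * n η = β * n ξ * n η + α * α * max C 0 * (n ξ * n η) := by
      rw [hKdef]; ring
    linarith
  -- the conjugate-linear functional in the second slot, as a linear map
  have hlin2 := hsesq.2
  set lmap : ↥D → (↥D →ₗ[ℂ] ℂ) := fun ξ =>
    { toFun := fun η => (starRingEnd ℂ) (Θ ξ η)
      map_add' := by
        intro η η'
        have h1 := (hlin2 ξ).map_add η η'
        have h2 := (hΥ2 (↑ξ : H)).map_add (↑η : H) (↑η' : H)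
        simp only [hΘdef, map_add, Submodule.coe_add] at *
        rw [h1, h2]; ring
      map_smul' := by
        intro c η
        have h1 := (hlin2 ξ).map_smul c η
        have h2 := (hΥ2 (↑ξ : H)).map_smul c (↑η : H)
        simp only [hΘdef, map_add, Submodule.coe_smul, smul_eq_mul,
          RingHom.id_apply] at *
        rw [h1, h2]; ring } with hlmapdef
  have hlmap_apply : ∀ ξ η : ↥D, lmap ξ η = (starRingEnd ℂ) (Θ ξ η) := fun _ _ => rfl
  -- linearity in the first slot
  have hΘaddl : ∀ ξ ξ' η : ↥D, Θ (ξ + ξ') η = Θ ξ η + Θ ξ' η := by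
    intro ξ ξ' η
    have h1 := (hsesq.1 η).map_add ξ ξ'
    have h2 := (hΥ1 (↑η : H)).map_add (↑ξ : H) (↑ξ' : H)
    simp only [hΘdef, Submodule.coe_add] at *
    rw [h1, h2]; ring
  have hΘsmull : ∀ (c : ℂ) (ξ η : ↥D), Θ (c • ξ) η = c * Θ ξ η := by
    intro c ξ η
    have h1 := (hsesq.1 η).map_smul c ξ
    have h2 := (hΥ1 (↑η : H)).map_smul c (↑ξ : H)
    simp only [hΘdef, Submodule.coe_smul, smul_eq_mul] at *
    rw [h1, h2]; ring
  -- the Banach space model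
  obtain ⟨M, hjsurj⟩ := hrefl
  letI := M.instGroup
  letI := M.instSpace
  letI := M.instComplete
  have hjinj : Function.Injective M.j := by
    intro x y hxy
    have h1 : M.j (x - y) = 0 := by rw [map_sub, hxy, sub_self]
    have h2 : n (x - y) = 0 := by rw [← M.isometry, h1, norm_zero]
    have h3 : x - y = 0 := (hn0 _).1 h2
    exact sub_eq_zero.1 h3
  set e : ↥D ≃ₗ[ℂ] M.E := LinearEquiv.ofBijective M.j ⟨hjinj, hjsurj⟩ with hedef
  have he_apply : ∀ x : ↥D, e x = M.j x := fun _ => rfl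
  have hne : ∀ x : ↥D, ‖e x‖ = n x := fun x => M.isometry x
  have hnesymm : ∀ v : M.E, n (e.symm v) = ‖v‖ := by
    intro v
    rw [← hne, e.apply_symm_apply]
  -- the functional g ξ on E
  have hgb : ∀ ξ : ↥D, ∀ v : M.E,
      ‖((lmap ξ).comp e.symm.toLinearMap) v‖ ≤ K * n ξ * ‖v‖ := by
    intro ξ v
    have h1 : ‖((lmap ξ).comp e.symm.toLinearMap) v‖ = ‖Θ ξ (e.symm v)‖ := by
      simp only [LinearMap.comp_apply, LinearEquiv.coe_toLinearMap, hlmap_apply]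
      exact RCLike.norm_conj _
    rw [h1, ← hnesymm v]
    exact hΘb ξ (e.symm v)
  set g : ↥D → (M.E →L[ℂ] ℂ) := fun ξ =>
    LinearMap.mkContinuous ((lmap ξ).comp e.symm.toLinearMap) (K * n ξ) (hgb ξ)
    with hgdef
  have hg_apply : ∀ (ξ : ↥D) (v : M.E), g ξ v = (starRingEnd ℂ) (Θ ξ (e.symm v)) :=
    fun _ _ => rfl
  have hg_norm : ∀ ξ : ↥D, ‖g ξ‖ ≤ K * n ξ := by
    intro ξ
    exact LinearMap.mkContinuous_norm_le _ (mul_nonneg hK.le (hn_nonneg ξ)) _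
  -- the semilinear map X
  set Xsl : M.E →ₗ⋆[ℂ] (M.E →L[ℂ] ℂ) :=
    { toFun := fun v => g (e.symm v)
      map_add' := by
        intro v v'
        apply ContinuousLinearMap.ext
        intro w
        simp only [ContinuousLinearMap.add_apply, hg_apply, map_add e.symm, hΘaddl,
          map_add]
      map_smul' := by
        intro c v
        apply ContinuousLinearMap.ext
        intro w
        simp only [ContinuousLinearMap.smul_apply, hg_apply, map_smul e.symm,
          hΘsmull, map_mul, smul_eq_mul, RingHom.id_apply] } with hXsldef
  have hXslb : ∀ v : M.E, ‖Xsl v‖ ≤ K * ‖v‖ := by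
    intro v
    have := hg_norm (e.symm v)
    rw [hnesymm v] at this
    exact this
  set X : M.E →SL[starRingEnd ℂ] (M.E →L[ℂ] ℂ) :=
    LinearMap.mkContinuous Xsl K hXslb with hXdef
  have hX_apply : ∀ (v : M.E) (w : M.E),
      X v w = (starRingEnd ℂ) (Θ (e.symm v) (e.symm w)) := fun _ _ => rfl
  have hΘ0 : ∀ η : ↥D, Θ (0 : ↥D) η = 0 := by
    intro η
    have h := hΘsmull 0 0 η
    simpa using h
  have hker : X.ker = ⊥ := by
    rw [LinearMap.ker_eq_bot']
    intro v hv
    have hfun : (fun η : ↥D => Ω (e.symm v) η + Υ ↑(e.symm v) ↑η)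
        = (fun η : ↥D => Ω (0 : ↥D) η + Υ ↑(0 : ↥D) ↑η) := by
      funext η
      have h1 : X v (e η) = 0 := by rw [ContinuousLinearMap.coe_coe] at hv; rw [hv]; rfl
      rw [hX_apply, e.symm_apply_apply] at h1
      have h2 : Θ (e.symm v) η = 0 := star_injective (by simpa using h1)
      have h3 : Θ (0 : ↥D) η = 0 := hΘ0 η
      exact h2.trans h3.symm
    have h4 : e.symm v = 0 := hinj hfun
    calc v = e (e.symm v) := (e.apply_symm_apply v).symm
    _ = e 0 := by rw [h4]
    _ = 0 := map_zero e
  have hrange : X.range = ⊤ := by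
    rw [LinearMap.range_eq_top]
    intro f
    set Λ : ↥D → ℂ := fun η => (starRingEnd ℂ) (f (e η)) with hΛdef
    have hΛmem : MemConjDual D n Λ := by
      refine ⟨?_, ?_, ‖f‖, ?_⟩
      · intro x y
        simp only [hΛdef, map_add, map_add e]
      · intro c x
        simp only [hΛdef, map_smul e, map_smul, smul_eq_mul, map_mul]
      · intro x
        have h1 : ‖Λ x‖ = ‖f (e x)‖ := RCLike.norm_conj _
        rw [h1, ← hne x]
        exact f.le_opNorm (e x)
    obtain ⟨ξ, hξ⟩ := hsurj Λ hΛmem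
    refine ⟨e ξ, ?_⟩
    apply ContinuousLinearMap.ext
    intro w
    rw [ContinuousLinearMap.coe_coe, hX_apply, e.symm_apply_apply]
    have h1 : Ω ξ (e.symm w) + Υ ↑ξ ↑(e.symm w) = Λ (e.symm w) := congrFun hξ (e.symm w)
    have h2 : Θ ξ (e.symm w) = Λ (e.symm w) := h1
    rw [h2, hΛdef]
    simp only [e.apply_symm_apply]
    exact Complex.conj_conj _
  set equiv := ContinuousLinearEquiv.ofBijective X hker hrange with hequivdef
  set S : (M.E →L[ℂ] ℂ) →SL[starRingEnd ℂ] M.E := ↑equiv.symm with hSdef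
  have hlow : ∀ v : M.E, ‖v‖ ≤ (‖S‖ + 1) * ‖X v‖ := by
    intro v
    have h1 : equiv.symm (X v) = v :=
      ContinuousLinearEquiv.ofBijective_symm_apply_apply X hker hrange v
    have h2 : ‖v‖ ≤ ‖S‖ * ‖X v‖ := by
      calc ‖v‖ = ‖S (X v)‖ := by rw [hSdef]; rw [show (equiv.symm : (M.E →L[ℂ] ℂ) →SL[starRingEnd ℂ] M.E) (X v) = equiv.symm (X v) from rfl, h1]
      _ ≤ ‖S‖ * ‖X v‖ := S.le_opNorm (X v)
    nlinarith [norm_nonneg (X v)]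
  refine ⟨(‖S‖ + 1)⁻¹, by positivity, ?_⟩
  intro ξ
  -- bound the operator norm by FormSup
  set SS : Set ℝ := {r : ℝ | ∃ η : ↥D, n η = 1 ∧ r = ‖Θ ξ η‖} with hSSdef
  have hSSbdd : BddAbove SS := by
    refine ⟨K * n ξ, ?_⟩
    rintro r ⟨η, hη1, rfl⟩
    have := hΘb ξ η
    rw [hη1, mul_one] at this
    exact this
  have hFeq : FormSup D (fun a b => Ω a b + Υ ↑a ↑b) n ξ = sSup SS := rfl
  have hFnonneg : 0 ≤ sSup SS := by
    rcases Set.eq_empty_or_nonempty SS with hS | hS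
    · rw [hS, Real.sSup_empty]
    · obtain ⟨r, hr⟩ := hS
      obtain ⟨η, hη1, rfl⟩ := hr
      exact le_trans (norm_nonneg _) (le_csSup hSSbdd ⟨η, hη1, rfl⟩)
  have hXle : ‖X (e ξ)‖ ≤ sSup SS := by
    apply ContinuousLinearMap.opNorm_le_bound _ hFnonneg
    intro w
    have heval : ‖X (e ξ) w‖ = ‖Θ ξ (e.symm w)‖ := by
      rw [hX_apply, e.symm_apply_apply]
      exact RCLike.norm_conj _
    set η : ↥D := e.symm w with hηdef
    have hηn : n η = ‖w‖ := hnesymm w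
    by_cases h0 : ‖w‖ = 0
    · have hη0 : η = 0 := (hn0 η).1 (by rw [hηn, h0])
      have hΘ0 : Θ ξ η = 0 := by
        have : lmap ξ η = 0 := by rw [hη0, map_zero]
        have h1 : (starRingEnd ℂ) (Θ ξ η) = 0 := this
        exact star_injective (by simpa using h1)
      rw [heval, hΘ0, h0, norm_zero, mul_zero]
    · have ht : 0 < ‖w‖ := lt_of_le_of_ne (norm_nonneg w) (Ne.symm h0)
      set t : ℝ := ‖w‖ with htdef
      set η' : ↥D := ((t : ℂ))⁻¹ • η with hη'def
      have hnormc : ‖((t : ℂ))⁻¹‖ = t⁻¹ := by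
        rw [norm_inv, Complex.norm_real, Real.norm_eq_abs, abs_of_pos ht]
      have hη'1 : n η' = 1 := by
        rw [hη'def, hnsmul, hnormc, hηn]
        field_simp
      have hval : ‖Θ ξ η'‖ = t⁻¹ * ‖Θ ξ η‖ := by
        have h1 : lmap ξ η' = ((t : ℂ))⁻¹ * lmap ξ η := by
          rw [hη'def, map_smul, smul_eq_mul]
        have h2 : (starRingEnd ℂ) (Θ ξ η') = ((t : ℂ))⁻¹ * (starRingEnd ℂ) (Θ ξ η) := h1
        have h3 : ‖Θ ξ η'‖ = ‖(starRingEnd ℂ) (Θ ξ η')‖ := (RCLike.norm_conj _).symm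
        rw [h3, h2, norm_mul, hnormc, RCLike.norm_conj]
      have hmem : ‖Θ ξ η'‖ ∈ SS := ⟨η', hη'1, rfl⟩
      have hle := le_csSup hSSbdd hmem
      rw [heval]
      have h4 : ‖Θ ξ η‖ = t * ‖Θ ξ η'‖ := by
        rw [hval]; field_simp
      rw [h4]
      calc t * ‖Θ ξ η'‖ ≤ t * sSup SS := by
            exact mul_le_mul_of_nonneg_left hle ht.le
      _ = sSup SS * ‖w‖ := by rw [htdef]; ring
  have h1 := hlow (e ξ)
  rw [hne ξ] at h1
  rw [hFeq]
  have hSpos : (0:ℝ) < ‖S‖ + 1 := by positivity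
  have h2 : (‖S‖ + 1)⁻¹ * n ξ ≤ (‖S‖ + 1)⁻¹ * ((‖S‖ + 1) * ‖X (e ξ)‖) :=
    mul_le_mul_of_nonneg_left h1 (by positivity)
  have h3 : (‖S‖ + 1)⁻¹ * ((‖S‖ + 1) * ‖X (e ξ)‖) = ‖X (e ξ)‖ := by
    field_simp
  rw [h3] at h2
  exact le_trans h2 hXle

end Paper

namespace Paper

theorem inP0_iff_bijection {H : Type} [NormedAddCommGroup H] [InnerProductSpace ℂ H]
    [CompleteSpace H] (D : Submodule ℂ H) (hD : Dense (D : Set H))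
    (Ω : ↥D → ↥D → ℂ) (hsesq : IsSesq Ω) (n : ↥D → ℝ) (hq : IsQClosed D Ω n)
    (Υ : H → H → ℂ) (hΥ : IsBoundedForm Υ) :
    (InP0 D Ω n Υ ↔
      (Function.Injective (fun ξ : ↥D => (fun η : ↥D => Ω ξ η + Υ ↑ξ ↑η)) ∧
        ∀ Λ : ↥D → ℂ, MemConjDual D n Λ →
          ∃ ξ : ↥D, (fun η : ↥D => Ω ξ η + Υ ↑ξ ↑η) = Λ)) ∧
    ((Function.Injective (fun ξ : ↥D => (fun η : ↥D => Ω ξ η + Υ ↑ξ ↑η)) ∧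
        ∀ Λ : ↥D → ℂ, MemConjDual D n Λ →
          ∃ ξ : ↥D, (fun η : ↥D => Ω ξ η + Υ ↑ξ ↑η) = Λ) ↔
      (Function.Injective (fun ξ : ↥D => (fun η : ↥D => Ω ξ η + Υ ↑ξ ↑η)) ∧
        (∀ Λ : ↥D → ℂ, MemConjDual D n Λ →
          ∃ ξ : ↥D, (fun η : ↥D => Ω ξ η + Υ ↑ξ ↑η) = Λ) ∧
        ∃ c : ℝ, 0 < c ∧ ∀ ξ : ↥D,
          c * n ξ ≤ FormSup D (fun a b => Ω a b + Υ ↑a ↑b) n ξ)) := by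
  have hΘ0l : ∀ η : ↥D, Ω 0 η + Υ ↑(0 : ↥D) ↑η = 0 := by
    intro η
    have h1 : Ω 0 η = 0 := (hsesq.1 η).map_zero
    have h2 : Υ ↑(0 : ↥D) ↑η = 0 := by
      have : ((0 : ↥D) : H) = 0 := rfl
      rw [this]
      exact (hΥ.1.1 (↑η : H)).map_zero
    rw [h1, h2, add_zero]
  have hΘsubl : ∀ ξ ξ' η : ↥D,
      (Ω ξ η + Υ ↑ξ ↑η) - (Ω ξ' η + Υ ↑ξ' ↑η) = Ω (ξ - ξ') η + Υ ↑(ξ - ξ') ↑η := by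
    intro ξ ξ' η
    have h1 := (hsesq.1 η).map_sub ξ ξ'
    have h2 := (hΥ.1.1 (↑η : H)).map_sub (↑ξ : H) (↑ξ' : H)
    rw [h1]
    have h3 : ((ξ - ξ' : ↥D) : H) = (↑ξ : H) - ↑ξ' := rfl
    rw [h3, h2]
    ring
  constructor
  · constructor
    · rintro ⟨hker, hrep⟩
      constructor
      · intro ξ ξ' hfun
        have h0 : ∀ η : ↥D, Ω (ξ - ξ') η + Υ ↑(ξ - ξ') ↑η = 0 := by
          intro η
          rw [← hΘsubl]
          have := congrFun hfun η
          simp only at this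
          rw [this, sub_self]
        have := hker _ h0
        exact sub_eq_zero.1 this
      · intro Λ hΛ
        obtain ⟨ξ, hξ⟩ := hrep Λ hΛ
        exact ⟨ξ, funext fun η => (hξ η).symm⟩
    · rintro ⟨hinj, hsurj⟩
      constructor
      · intro ξ hξ
        have hfun : (fun η : ↥D => Ω ξ η + Υ ↑ξ ↑η)
            = (fun η : ↥D => Ω (0 : ↥D) η + Υ ↑(0 : ↥D) ↑η) := by
          funext η
          rw [hξ η, hΘ0l η]
        exact hinj hfun
      · intro Λ hΛ
        obtain ⟨ξ, hξ⟩ := hsurj Λ hΛ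
        exact ⟨ξ, fun η => (congrFun hξ η).symm⟩
  · constructor
    · rintro ⟨hinj, hsurj⟩
      exact ⟨hinj, hsurj, key_estimate D Ω hsesq n hq Υ hΥ hinj hsurj⟩
    · rintro ⟨hinj, hsurj, -⟩
      exact ⟨hinj, hsurj⟩

end Paper
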